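/- arXiv:2208.00799 — 2 statements merged into one kernel-verified Lean document; each statement's English description precedes it below -/
import Mathlib

section
/- Let h : ℝⁿ → ℝ ∪ {∞} be proper, lower semicontinuous, and prox-bounded with threshold γ_h. If (zˡ) → z ∈ dom h, γˡ ↘ 0, z̄ˡ ∈ prox_{γˡ h}(zˡ), then the sequence (z̄ˡ) is bounded. -/
open Filter Topology

/-- `prox_{γ h}(x)`: the set of minimizers of `z ↦ h z + (1/(2γ))‖z - x‖²`. -/
noncomputable def prox {n : ℕ} (γ : ℝ) (h : EuclideanSpace ℝ (Fin n) → EReal)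
    (x : EuclideanSpace ℝ (Fin n)) : Set (EuclideanSpace ℝ (Fin n)) :=
  {z | ∀ w, h z + ((1 / (2 * γ) * ‖z - x‖ ^ 2 : ℝ) : EReal)
          ≤ h w + ((1 / (2 * γ) * ‖w - x‖ ^ 2 : ℝ) : EReal)}

/-- if `h` is proper, lsc and prox-bounded, `zˡ → z ∈ dom h`, `γˡ ↘ 0`, and
`z̄ˡ ∈ prox_{γˡ h}(zˡ)`, then the sequence `(z̄ˡ)` is bounded. -/
theorem prox_bounded_of_stepsize_tendsto_zero {n : ℕ}
    (h : EuclideanSpace ℝ (Fin n) → EReal)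
    (hproper : (∀ x, h x ≠ ⊥) ∧ ∃ x, h x ≠ ⊤)
    (hlsc : LowerSemicontinuous h)
    (hpb : ∃ γ > (0:ℝ), ∃ M : ℝ, ∀ x, (M : EReal) ≤ h x + ((1 / (2 * γ) * ‖x‖ ^ 2 : ℝ) : EReal))
    (z : EuclideanSpace ℝ (Fin n)) (hz : h z ≠ ⊤)
    (zs : ℕ → EuclideanSpace ℝ (Fin n)) (hzs : Tendsto zs atTop (𝓝 z))
    (γ : ℕ → ℝ) (hγpos : ∀ l, 0 < γ l) (hγanti : Antitone γ)
    (hγ0 : Tendsto γ atTop (𝓝 0))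
    (zb : ℕ → EuclideanSpace ℝ (Fin n)) (hzb : ∀ l, zb l ∈ prox (γ l) h (zs l)) :
    ∃ R : ℝ, ∀ l, ‖zb l‖ ≤ R := by
  obtain ⟨hbot, -⟩ := hproper
  obtain ⟨γ₀, hγ₀pos, M, hM⟩ := hpb
  -- h z is finite
  set c : ℝ := (h z).toReal with hc
  clear_value c
  have hcz : h z = (c : EReal) := by rw [hc]; exact (EReal.coe_toReal hz (hbot z)).symm
  -- the sequence zs is norm-bounded
  obtain ⟨K₀, hK₀⟩ := (hzs.norm.bddAbove_range)
  set K : ℝ := max K₀ 0 with hKdef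
  clear_value K
  have hK0 : 0 ≤ K := by rw [hKdef]; exact le_max_right _ _
  have hK : ∀ l, ‖zs l‖ ≤ K := by
    intro l; rw [hKdef]; exact le_trans (hK₀ ⟨l, rfl⟩) (le_max_left _ _)
  -- eventually γ l ≤ γ₀ / 2
  obtain ⟨L, hL⟩ : ∃ L, ∀ l ≥ L, γ l ≤ γ₀ / 2 := by
    have : ∀ᶠ l in atTop, γ l < γ₀ / 2 :=
      hγ0.eventually (gt_mem_nhds (by positivity))
    obtain ⟨L, hL⟩ := eventually_atTop.1 this
    exact ⟨L, fun l hl => (hL l hl).le⟩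
  set E : ℝ := γ₀ * |c - M| + (‖z‖ + K) ^ 2 with hE
  clear_value E
  have hE0 : 0 ≤ E := by rw [hE]; positivity
  set R₁ : ℝ := 4 * K + 2 * E + 1 with hR₁
  clear_value R₁
  -- the main bound for l ≥ L
  have main : ∀ l ≥ L, ‖zb l‖ ≤ R₁ := by
    intro l hl
    have hg : 0 < γ l := hγpos l
    have hgle : γ l ≤ γ₀ / 2 := hL l hl
    have hprox := hzb l z
    -- h (zb l) is finite
    have hnt : h (zb l) ≠ ⊤ := by
      intro ht
      rw [ht, hcz, EReal.top_add_coe, ← EReal.coe_add] at hprox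
      exact ((EReal.coe_lt_top _).not_ge) hprox
    set d : ℝ := (h (zb l)).toReal with hd
    clear_value d
    have hdz : h (zb l) = (d : EReal) := by rw [hd]; exact (EReal.coe_toReal hnt (hbot (zb l))).symm
    rw [hdz, hcz, ← EReal.coe_add, ← EReal.coe_add, EReal.coe_le_coe_iff] at hprox
    -- prox: d + α A ≤ c + α B, α = 1/(2 γ l)
    set A : ℝ := ‖zb l - zs l‖ ^ 2 with hA
    clear_value A
    set B : ℝ := ‖z - zs l‖ ^ 2 with hB
    clear_value B
    have hMb := hM (zb l)
    rw [hdz, ← EReal.coe_add, EReal.coe_le_coe_iff] at hMb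
    -- clear denominators
    have f1 : 2 * γ l * d + A ≤ 2 * γ l * c + B := by
      have h2g : (0:ℝ) < 2 * γ l := by positivity
      have e1 : 2 * γ l * (1 / (2 * γ l) * A) = A := by field_simp
      have e2 : 2 * γ l * (1 / (2 * γ l) * B) = B := by field_simp
      have := mul_le_mul_of_nonneg_left hprox h2g.le
      nlinarith [this, e1, e2]
    have f2 : 2 * γ₀ * M ≤ 2 * γ₀ * d + ‖zb l‖ ^ 2 := by
      have h2g : (0:ℝ) < 2 * γ₀ := by positivity
      have e1 : 2 * γ₀ * (1 / (2 * γ₀) * ‖zb l‖ ^ 2) = ‖zb l‖ ^ 2 := by field_simp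
      have := mul_le_mul_of_nonneg_left hMb h2g.le
      nlinarith [this, e1]
    set b : ℝ := ‖zb l‖ with hb
    clear_value b
    have hb0 : 0 ≤ b := by rw [hb]; exact norm_nonneg _
    set k : ℝ := ‖zs l‖ with hk
    clear_value k
    have hk0 : 0 ≤ k := by rw [hk]; exact norm_nonneg _
    have hkK : k ≤ K := by rw [hk]; exact hK l
    have habs : (b - k) ^ 2 ≤ A := by
      rw [hA, hb, hk]
      have h1 : |‖zb l‖ - ‖zs l‖| ≤ ‖zb l - zs l‖ := abs_norm_sub_norm_le _ _
      calc (‖zb l‖ - ‖zs l‖) ^ 2 = |‖zb l‖ - ‖zs l‖| ^ 2 := (sq_abs _).symm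
        _ ≤ ‖zb l - zs l‖ ^ 2 := by
            exact pow_le_pow_left₀ (abs_nonneg _) h1 2
    have hBle : B ≤ (‖z‖ + K) ^ 2 := by
      rw [hB]
      have h1 : ‖z - zs l‖ ≤ ‖z‖ + ‖zs l‖ := norm_sub_le _ _
      have hkK' := hK l
      have h2 : ‖z - zs l‖ ≤ ‖z‖ + K := h1.trans (by linarith)
      exact pow_le_pow_left₀ (norm_nonneg _) h2 2
    have hgc : 4 * γ l * (c - M) ≤ 2 * γ₀ * |c - M| := by
      have h1 : c - M ≤ |c - M| := le_abs_self _
      have h2 : 0 ≤ |c - M| := abs_nonneg _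
      nlinarith
    -- γ₀-scaled quadratic bound
    have key : γ₀ * b ^ 2 ≤ γ₀ * (4 * b * K + 2 * E) := by
      have P1 := mul_le_mul_of_nonneg_left f1 hγ₀pos.le
      have P2 := mul_le_mul_of_nonneg_left f2 hg.le
      have P3 : γ l * b ^ 2 ≤ (γ₀ / 2) * b ^ 2 :=
        mul_le_mul_of_nonneg_right hgle (sq_nonneg _)
      have P4 := mul_le_mul_of_nonneg_left habs hγ₀pos.le
      have P5 := mul_le_mul_of_nonneg_left hBle hγ₀pos.le
      have P6 : 0 ≤ γ₀ * b * (K - k) := by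
        apply mul_nonneg (mul_nonneg hγ₀pos.le hb0); linarith
      have P7 : 0 ≤ γ₀ * k ^ 2 := by positivity
      have P8 : γ₀ * (4 * γ l * (c - M)) ≤ γ₀ * (2 * γ₀ * |c - M|) :=
        mul_le_mul_of_nonneg_left hgc hγ₀pos.le
      rw [hE]
      linarith [P1, P2, P3, P4, P5, P6, P7, P8]
    have key2 : b ^ 2 ≤ 4 * b * K + 2 * E :=
      (mul_le_mul_iff_right₀ hγ₀pos).mp key
    rw [hR₁]
    by_contra hcon
    push_neg at hcon
    have h1 : 1 ≤ b := by linarith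
    have hbpos : 0 < b := by linarith
    have h2 : (4 * K + 2 * E + 1) * b < b * b := mul_lt_mul_of_pos_right hcon hbpos
    have h3 : E ≤ E * b := le_mul_of_one_le_right hE0 h1
    linarith [key2, h2, h3, h1]
  -- combine with the finitely many initial terms
  set S : NNReal := (Finset.range L).sup fun l => ‖zb l‖₊ with hS
  refine ⟨max R₁ S, fun l => ?_⟩
  rcases le_or_gt L l with hl | hl
  · exact le_trans (main l hl) (le_max_left _ _)
  · have : ‖zb l‖₊ ≤ S := Finset.le_sup (f := fun l => ‖zb l‖₊) (Finset.mem_range.2 hl)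
    calc ‖zb l‖ = (‖zb l‖₊ : ℝ) := rfl
      _ ≤ (S : ℝ) := by exact_mod_cast this
      _ ≤ max R₁ S := le_max_right _ _
end

section
/- Let U ⊆ ℝⁿ be open and f : U → ℝ be continuously differentiable with locally Lipschitz gradient on U. Then for every compact set Ω ⊂ U there exists L ≥ 0 such that f(z') ≤ f(z) + ⟨∇f(z), z' - z⟩ + (L/2)‖z' - z‖² for all z, z' ∈ Ω. -/
open Filter Topology Metric Set

private lemma lipschitzOnWith_weaken {α β : Type*} [PseudoMetricSpace α] [PseudoMetricSpace β]
    {K K' : NNReal} {f : α → β} {s : Set α} (h : LipschitzOnWith K f s) (hK : K ≤ K') :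
    LipschitzOnWith K' f s := by
  rw [lipschitzOnWith_iff_dist_le_mul] at h ⊢
  intro x hx y hy
  exact (h x hx y hy).trans
    (mul_le_mul_of_nonneg_right (by exact_mod_cast hK) dist_nonneg)

/-- if `f` is `C¹` on an open set `U` with locally Lipschitz gradient, then on every
compact `Ω ⊆ U` there is `L ≥ 0` such that the descent-lemma quadratic upper bound
`f z' ≤ f z + ⟨∇f z, z' - z⟩ + (L/2)‖z' - z‖²` holds for all `z, z' ∈ Ω`. -/
theorem descent_lemma_on_compact {n : ℕ}
    (U : Set (EuclideanSpace ℝ (Fin n))) (hU : IsOpen U)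
    (f : EuclideanSpace ℝ (Fin n) → ℝ)
    (hf : ContDiffOn ℝ 1 f U)
    (hlip : ∀ x ∈ U, ∃ K : NNReal, ∃ s ∈ 𝓝 x, LipschitzOnWith K (gradient f) s)
    (Ω : Set (EuclideanSpace ℝ (Fin n))) (hΩc : IsCompact Ω) (hΩU : Ω ⊆ U) :
    ∃ L : ℝ, 0 ≤ L ∧ ∀ z ∈ Ω, ∀ z' ∈ Ω,
      f z' ≤ f z + (inner ℝ (gradient f z) (z' - z) : ℝ) + L / 2 * ‖z' - z‖ ^ 2 := by
  classical
  rcases Ω.eq_empty_or_nonempty with hΩe | hΩne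
  · exact ⟨0, le_refl 0, by simp [hΩe]⟩
  -- For each point pick a radius and local Lipschitz constant for the gradient
  have hP : ∀ x : EuclideanSpace ℝ (Fin n), ∃ r : ℝ, ∃ K : NNReal, 0 < r ∧
      (x ∈ Ω → closedBall x (2*r) ⊆ U ∧
        LipschitzOnWith K (gradient f) (closedBall x (2*r))) := by
    intro x
    by_cases hx : x ∈ Ω
    · obtain ⟨K, s, hs, hK⟩ := hlip x (hΩU hx)
      have hmem : s ∩ U ∈ 𝓝 x := Filter.inter_mem hs (hU.mem_nhds (hΩU hx))
      obtain ⟨ε, hε, hball⟩ := Metric.mem_nhds_iff.mp hmem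
      have hsub : closedBall x (2*(ε/4)) ⊆ s ∩ U := by
        refine (closedBall_subset_ball ?_).trans hball
        linarith
      exact ⟨ε/4, K, by positivity, fun _ =>
        ⟨hsub.trans inter_subset_right, hK.mono (hsub.trans inter_subset_left)⟩⟩
    · exact ⟨1, 1, one_pos, fun h => absurd h hx⟩
  choose r K hr hrK using hP
  obtain ⟨t, htΩ, htcov⟩ := hΩc.elim_nhds_subcover (fun x => ball x (r x))
      (fun x _ => Metric.ball_mem_nhds x (hr x))
  have htne : t.Nonempty := by
    obtain ⟨z, hz⟩ := hΩne
    obtain ⟨x, hx⟩ := Set.mem_iUnion₂.mp (htcov hz)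
    exact ⟨x, hx.1⟩
  set ρ : ℝ := t.inf' htne r with hρdef
  have hρ : 0 < ρ := by
    rw [hρdef, Finset.lt_inf'_iff]
    exact fun b _ => hr b
  set L₀ : NNReal := t.sup K with hL₀def
  -- uniform local Lipschitz bound around points of Ω
  have key : ∀ z ∈ Ω, closedBall z ρ ⊆ U ∧
      LipschitzOnWith L₀ (gradient f) (closedBall z ρ) := by
    intro z hz
    obtain ⟨x, hx⟩ := Set.mem_iUnion₂.mp (htcov hz)
    obtain ⟨hxt, hzx⟩ := hx
    have hρle : ρ ≤ r x := Finset.inf'_le r hxt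
    have hsub : closedBall z ρ ⊆ closedBall x (2 * r x) := by
      intro y hy
      simp only [mem_closedBall] at hy ⊢
      have h1 : dist y x ≤ dist y z + dist z x := dist_triangle y z x
      have h2 : dist z x < r x := mem_ball.mp hzx
      linarith
    obtain ⟨hU2, hlip2⟩ := hrK x (htΩ x hxt)
    exact ⟨hsub.trans hU2,
      lipschitzOnWith_weaken (hlip2.mono hsub) (Finset.le_sup hxt)⟩
  -- bounds on f, gradient, and the diameter of Ω
  obtain ⟨M, hM⟩ := hΩc.exists_bound_of_continuousOn (hf.continuousOn.mono hΩU)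
  have hgradcont : ContinuousOn (gradient f) Ω := by
    have h1 : ContinuousOn (fderiv ℝ f) U := hf.continuousOn_fderiv_of_isOpen hU le_rfl
    have : ContinuousOn (fun x => (InnerProductSpace.toDual ℝ
        (EuclideanSpace ℝ (Fin n))).symm (fderiv ℝ f x)) U :=
      (InnerProductSpace.toDual ℝ _).symm.continuous.comp_continuousOn h1
    exact this.mono hΩU
  obtain ⟨G, hG⟩ := hΩc.exists_bound_of_continuousOn hgradcont
  obtain ⟨R, hR⟩ := hΩc.isBounded.subset_closedBall 0
  have hdiam : ∀ z ∈ Ω, ∀ z' ∈ Ω, ‖z' - z‖ ≤ 2 * (|R| + 1) := by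
    intro z hz z' hz'
    have h1 : ‖z‖ ≤ R := by simpa using hR hz
    have h2 : ‖z'‖ ≤ R := by simpa using hR hz'
    have := norm_sub_le z' z
    have : R ≤ |R| := le_abs_self R
    calc ‖z' - z‖ ≤ ‖z'‖ + ‖z‖ := norm_sub_le z' z
      _ ≤ 2 * (|R| + 1) := by linarith
  set M' : ℝ := max M 0 with hM'def
  set G' : ℝ := max G 0 with hG'def
  have hM' : ∀ x ∈ Ω, |f x| ≤ M' := by
    intro x hx
    have := hM x hx
    rw [Real.norm_eq_abs] at this
    exact this.trans (le_max_left _ _)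
  have hG' : ∀ x ∈ Ω, ‖gradient f x‖ ≤ G' := fun x hx => (hG x hx).trans (le_max_left _ _)
  set C₁ : ℝ := 2 * M' + G' * (2 * (|R| + 1)) with hC₁def
  have hC₁ : 0 ≤ C₁ := by
    have h1 : (0:ℝ) ≤ M' := le_max_right _ _
    have h2 : (0:ℝ) ≤ G' := le_max_right _ _
    positivity
  refine ⟨2 * (L₀ : ℝ) + 2 * C₁ / ρ ^ 2, by positivity, ?_⟩
  intro z hz z' hz'
  -- the key quantity
  have hfd : fderiv ℝ f z (z' - z) = (inner ℝ (gradient f z) (z' - z) : ℝ) := by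
    have : fderiv ℝ f z = InnerProductSpace.toDual ℝ _ (gradient f z) := by
      simp [gradient]
    rw [this, InnerProductSpace.toDual_apply_apply]
  by_cases hnear : ‖z' - z‖ ≤ ρ
  · -- near case: segment inside closedBall z ‖z' - z‖ ⊆ closedBall z ρ
    set s : Set (EuclideanSpace ℝ (Fin n)) := closedBall z ‖z' - z‖ with hsdef
    have hsρ : s ⊆ closedBall z ρ := closedBall_subset_closedBall hnear
    obtain ⟨hUρ, hlipρ⟩ := key z hz
    have hsU : s ⊆ U := hsρ.trans hUρ
    have hdiff : ∀ x ∈ s, HasFDerivWithinAt f (fderiv ℝ f x) s x := by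
      intro x hx
      exact (((hf.differentiableOn one_ne_zero) x (hsU hx)).differentiableAt
        (hU.mem_nhds (hsU hx))).hasFDerivAt.hasFDerivWithinAt
    have hbound : ∀ x ∈ s, ‖fderiv ℝ f x - fderiv ℝ f z‖ ≤ (L₀ : ℝ) * ‖z' - z‖ := by
      intro x hx
      have heq : ‖fderiv ℝ f x - fderiv ℝ f z‖ = ‖gradient f x - gradient f z‖ := by
        have : gradient f x - gradient f z = (InnerProductSpace.toDual ℝ
            (EuclideanSpace ℝ (Fin n))).symm (fderiv ℝ f x - fderiv ℝ f z) := by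
          simp [gradient]
        rw [this, LinearIsometryEquiv.norm_map]
      rw [heq]
      have hzs : z ∈ closedBall z ρ := mem_closedBall_self hρ.le
      have hdle : dist x z ≤ ‖z' - z‖ := mem_closedBall.mp hx
      have := (lipschitzOnWith_iff_dist_le_mul.mp hlipρ) x (hsρ hx) z hzs
      calc ‖gradient f x - gradient f z‖ = dist (gradient f x) (gradient f z) := by
            rw [dist_eq_norm]
        _ ≤ (L₀ : ℝ) * dist x z := this
        _ ≤ (L₀ : ℝ) * ‖z' - z‖ := by
            exact mul_le_mul_of_nonneg_left hdle L₀.coe_nonneg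
    have hzs : z ∈ s := mem_closedBall_self (norm_nonneg _)
    have hz's : z' ∈ s := by
      simp only [hsdef, mem_closedBall]
      exact le_of_eq (dist_eq_norm z' z)
    have hmvt := (convex_closedBall z ‖z' - z‖).norm_image_sub_le_of_norm_hasFDerivWithin_le'
      hdiff hbound hzs hz's
    rw [hfd] at hmvt
    have h1 : f z' - f z - (inner ℝ (gradient f z) (z' - z) : ℝ) ≤ (L₀ : ℝ) * ‖z' - z‖ * ‖z' - z‖ :=
      (le_abs_self _).trans (by simpa [Real.norm_eq_abs] using hmvt)
    have h2 : (0:ℝ) ≤ C₁ / ρ ^ 2 := by positivity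
    have hhalf : (2 * (L₀:ℝ) + 2 * C₁ / ρ ^ 2) / 2 = (L₀:ℝ) + C₁ / ρ ^ 2 := by ring
    rw [hhalf]
    nlinarith [h1, mul_nonneg h2 (sq_nonneg ‖z' - z‖)]
  · -- far case
    push_neg at hnear
    have h1 : |f z| ≤ M' := hM' z hz
    have h2 : |f z'| ≤ M' := hM' z' hz'
    have h3 : |(inner ℝ (gradient f z) (z' - z) : ℝ)| ≤ G' * (2 * (|R| + 1)) := by
      calc |(inner ℝ (gradient f z) (z' - z) : ℝ)| ≤ ‖gradient f z‖ * ‖z' - z‖ :=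
            abs_real_inner_le_norm _ _
        _ ≤ G' * (2 * (|R| + 1)) := by
            apply mul_le_mul (hG' z hz) (hdiam z hz z' hz') (norm_nonneg _)
            exact (norm_nonneg _).trans (hG' z hz)
    have hLHS : f z' - f z - (inner ℝ (gradient f z) (z' - z) : ℝ) ≤ C₁ := by
      have := abs_le.mp h1
      have := abs_le.mp h2
      have := abs_le.mp h3
      rw [hC₁def]; cases abs_le.mp h1; cases abs_le.mp h2; cases abs_le.mp h3; linarith
    have hρsq : ρ ^ 2 ≤ ‖z' - z‖ ^ 2 := by nlinarith [norm_nonneg (z' - z)]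
    have hC₁le : C₁ ≤ C₁ / ρ ^ 2 * ‖z' - z‖ ^ 2 := by
      rw [div_mul_eq_mul_div, le_div_iff₀ (by positivity)]
      nlinarith
    have hL₀ : (0:ℝ) ≤ (L₀ : ℝ) * ‖z' - z‖ ^ 2 := by positivity
    have hhalf : (2 * (L₀:ℝ) + 2 * C₁ / ρ ^ 2) / 2 = (L₀:ℝ) + C₁ / ρ ^ 2 := by ring
    rw [hhalf]
    nlinarith [hLHS, hC₁le, hL₀]
end
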